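/- Every top-down WEPDA is weakly equivalent to a binarized top-down WEPDA, all of whose transitions have one of the forms p, X[∘A] →^{a/w} q, Y[S], Z[∘β], ε; p, X[∘A] →^{a/w} q, ε, Y[∘β], Z[S]; p, X[∘A] →^{a/w} q, ε, Y[∘β], ε; or p, X[A] →^{a/w} q, ε, ε, ε, with |β| ≤ 2. -/

import Mathlib

open scoped BigOperators

namespace CtrlForm

/-- Transitions of a weighted embedded pushdown automaton:
`repl p X β a q Ψ Y β' Ψ'` is the transition
`p, X[∘β] →^a q, Ψ, Y[∘β'], Ψ'` (replace the top `β` of the top inner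
stack by `β'`, relabel `X` to `Y`, insert the inner stacks `Ψ` below and
`Ψ'` above the top inner stack), and `popT p X β a q` is the transition
`p, X[β] →^a q, ε, ε, ε` popping the entire top inner stack. -/
inductive ETrans (Q N T Γ : Type) where
  | repl (p : Q) (X : N) (β : List Γ) (a : Option T) (q : Q)
      (Ψ : List (N × List Γ)) (Y : N) (β' : List Γ) (Ψ' : List (N × List Γ))
  | popT (p : Q) (X : N) (β : List Γ) (a : Option T) (q : Q)

/-- A weighted embedded pushdown automaton over a weight type `A`.
Configurations consist of a state and an outer stack of labeled inner
stacks (tops at the right of the lists). -/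
structure WEPDA (Q N T Γ A : Type) where
  trans : List (ETrans Q N T Γ)
  wt : ETrans Q N T Γ → A
  qInit : Q
  stackInit : List (N × List Γ)
  qFin : Q
  stackFin : List (N × List Γ)

namespace WEPDA

variable {Q N T Γ A : Type}

/-- Runs of a WEPDA from a configuration to a configuration, scanning a
string; represented as data so that they carry weights. -/
inductive Run (M : WEPDA Q N T Γ A) :
    Q × List (N × List Γ) → Q × List (N × List Γ) → List T → Type where
  | refl (c : Q × List (N × List Γ)) : Run M c c []
  | repl (Φ : List (N × List Γ)) (σ : List Γ) (p : Q) (X : N) (β : List Γ)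
      (a : Option T) (q : Q) (Ψ : List (N × List Γ)) (Y : N) (β' : List Γ)
      (Ψ' : List (N × List Γ)) {c : Q × List (N × List Γ)} {w : List T}
      (ht : ETrans.repl p X β a q Ψ Y β' Ψ' ∈ M.trans)
      (r : Run M (q, Φ ++ Ψ ++ [(Y, σ ++ β')] ++ Ψ') c w) :
      Run M (p, Φ ++ [(X, σ ++ β)]) c (a.toList ++ w)
  | popT (Φ : List (N × List Γ)) (p : Q) (X : N) (β : List Γ) (a : Option T) (q : Q)
      {c : Q × List (N × List Γ)} {w : List T}
      (ht : ETrans.popT p X β a q ∈ M.trans)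
      (r : Run M (q, Φ) c w) :
      Run M (p, Φ ++ [(X, β)]) c (a.toList ++ w)

/-- The string language of a WEPDA: all strings scanned by accepting runs. -/
def language (M : WEPDA Q N T Γ A) : Set (List T) :=
  { w | Nonempty (Run M (M.qInit, M.stackInit) (M.qFin, M.stackFin) w) }

/-- A WEPDA is top-down (with distinguished stack symbol `S` and initial
inner-stack label `S₀`) if every transition pops exactly one symbol from
the top inner stack or pops a singleton top inner stack entirely, all
auxiliary inner stacks contain only the symbol `S`, the initial
configuration is `(q_init, S₀[S])`, and the final configuration is
`(q_f, ε)`. -/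
def IsTopDown (M : WEPDA Q N T Γ A) : Prop :=
  ∃ (S : Γ) (S₀ : N),
    M.stackInit = [(S₀, [S])] ∧ M.stackFin = [] ∧
    ∀ t ∈ M.trans,
      (∃ p X A' a q Ψ Y β Ψ',
        t = ETrans.repl p X [A'] a q Ψ Y β Ψ' ∧
        (∀ x ∈ Ψ, (x : N × List Γ).2 = [S]) ∧ (∀ x ∈ Ψ', (x : N × List Γ).2 = [S])) ∨
      (∃ p X A' a q, t = ETrans.popT p X [A'] a q)

end WEPDA

namespace WEPDA

/-- A top-down WEPDA is binarized if all its transitions have one of the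
forms `p, X[∘A] →^a q, Y[S], Z[∘β], ε`; `p, X[∘A] →^a q, ε, Y[∘β], Z[S]`;
`p, X[∘A] →^a q, ε, Y[∘β], ε`; or `p, X[A] →^a q, ε, ε, ε`, with `|β| ≤ 2`. -/
def IsBinarizedTopDown {Q N T Γ A : Type} (S : Γ) (S₀ : N) (M : WEPDA Q N T Γ A) : Prop :=
  M.stackInit = [(S₀, [S])] ∧ M.stackFin = [] ∧
  ∀ t ∈ M.trans,
    (∃ p X A' a q Y Z β, β.length ≤ 2 ∧
      t = ETrans.repl p X [A'] a q [(Y, [S])] Z β []) ∨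
    (∃ p X A' a q Y Z β, β.length ≤ 2 ∧
      t = ETrans.repl p X [A'] a q [] Y β [(Z, [S])]) ∨
    (∃ p X A' a q Y β, β.length ≤ 2 ∧
      t = ETrans.repl p X [A'] a q [] Y β []) ∨
    (∃ p X A' a q, t = ETrans.popT p X [A'] a q)

/-- A top-down WEPDA is in normal form if all its transitions have one of
the seven listed types. -/
def IsNormalForm {Q N T Γ A : Type} (S : Γ) (S₀ : N) (M : WEPDA Q N T Γ A) : Prop :=
  M.stackInit = [(S₀, [S])] ∧ M.stackFin = [] ∧
  ∀ t ∈ M.trans,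
    (∃ p X A' a q Y Z β, β.length ≤ 2 ∧
      t = ETrans.repl p X [A'] a q [(Y, [S])] Z β []) ∨
    (∃ p X A' a q Y Z β, β.length ≤ 2 ∧
      t = ETrans.repl p X [A'] a q [] Y β [(Z, [S])]) ∨
    (∃ p X A' a q Y B C, t = ETrans.repl p X [A'] a q [] Y [B, C] []) ∨
    (∃ p X A' c q Y B, t = ETrans.repl p X [A'] (some c) q [] Y [B] []) ∨
    (∃ p X A' c q Y, t = ETrans.repl p X [A'] (some c) q [] Y [] []) ∨
    (∃ p X A' c q, t = ETrans.popT p X [A'] (some c) q) ∨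
    (∃ p a q, t = ETrans.popT p S₀ [S] a q)

end WEPDA

/- ======================= auxiliary development ======================= -/

namespace Binarize

open WEPDA

variable {Q N T Γ A : Type}

/-- New labels: original labels plus temp-stack markers. -/
abbrev Nb (Q N T Γ : Type) : Type := N ⊕ (ETrans Q N T Γ × List (N × List Γ))
/-- New stack symbols: original symbols plus chain markers. -/
abbrev Gb (Q N T Γ : Type) : Type := Γ ⊕ (ETrans Q N T Γ × List (N × List Γ) × List Γ)

def embP (x : N × List Γ) : Nb Q N T Γ × List (Gb Q N T Γ) :=
  (Sum.inl x.1, x.2.map Sum.inl)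

def emb (Φ : List (N × List Γ)) : List (Nb Q N T Γ × List (Gb Q N T Γ)) :=
  Φ.map embP

theorem emb_nil : emb ([] : List (N × List Γ)) = ([] : List (Nb Q N T Γ × List (Gb Q N T Γ))) := rfl

theorem emb_append (Φ Ψ : List (N × List Γ)) :
    (emb (Φ ++ Ψ) : List (Nb Q N T Γ × List (Gb Q N T Γ))) = emb Φ ++ emb Ψ := by
  simp [emb]

theorem embP_inj : Function.Injective (embP (Q := Q) (N := N) (T := T) (Γ := Γ)) := by
  rintro ⟨a, b⟩ ⟨c, d⟩ h
  simp only [embP, Prod.mk.injEq, Sum.inl.injEq] at h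
  obtain ⟨h1, h2⟩ := h
  have h3 := List.map_injective_iff.mpr
    (Sum.inl_injective : Function.Injective (Sum.inl : Γ → Gb Q N T Γ)) h2
  simp [h1, h3]

theorem emb_inj : Function.Injective (emb (Q := Q) (N := N) (T := T) (Γ := Γ)) :=
  List.map_injective_iff.mpr embP_inj

theorem snoc_inj {α : Type*} {l l' : List α} {a b : α} (h : l ++ [a] = l' ++ [b]) :
    l = l' ∧ a = b := by
  obtain ⟨h1, h2⟩ := List.append_inj' h rfl
  exact ⟨h1, by simpa using h2⟩

theorem map_eq_snoc {α β : Type*} {f : α → β} {l : List α} {u : List β} {x : β}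
    (h : l.map f = u ++ [x]) : ∃ l' y, l = l' ++ [y] ∧ l'.map f = u ∧ f y = x := by
  induction l using List.reverseRecOn with
  | nil => simp at h
  | append_singleton l' y _ =>
      rw [List.map_append] at h
      obtain ⟨h1, h2⟩ := snoc_inj (by simpa using h)
      exact ⟨l', y, rfl, h1, h2⟩

theorem emb_eq_snoc {Φ : List (N × List Γ)} {L : List (Nb Q N T Γ × List (Gb Q N T Γ))}
    {x : Nb Q N T Γ × List (Gb Q N T Γ)} (h : emb Φ = L ++ [x]) :
    ∃ Φ' y, Φ = Φ' ++ [y] ∧ emb Φ' = L ∧ embP y = x :=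
  map_eq_snoc h

theorem emb_no_inr_content {Φ : List (N × List Γ)} {L : List (Nb Q N T Γ × List (Gb Q N T Γ))}
    {lab : Nb Q N T Γ} {u : List (Gb Q N T Γ)}
    (h : emb Φ = L ++ [(lab, u)]) (hm : ∃ g : ETrans Q N T Γ × List (N × List Γ) × List Γ,
      (Sum.inr g : Gb Q N T Γ) ∈ u) : False := by
  obtain ⟨Φ', y, _, _, hy⟩ := emb_eq_snoc h
  have h2 : (y.2.map Sum.inl : List (Gb Q N T Γ)) = u :=
    (by simpa [embP, Prod.ext_iff] using hy : _ ∧ _).2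
  obtain ⟨g, hg⟩ := hm
  rw [← h2] at hg
  simp at hg

theorem emb_no_inr_label {Φ : List (N × List Γ)} {L : List (Nb Q N T Γ × List (Gb Q N T Γ))}
    {m : ETrans Q N T Γ × List (N × List Γ)} {cont : List (Gb Q N T Γ)}
    (h : emb Φ = L ++ [(Sum.inr m, cont)]) : False := by
  obtain ⟨Φ', y, _, _, hy⟩ := emb_eq_snoc h
  simp [embP, Prod.ext_iff] at hy

/- ------------------ the binarized chain construction ------------------ -/

/-- First transition of the chain simulating a `repl` transition `t`:
consume `a`, pop the popped symbols, leave a marker recording the pending work. -/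
def stepS (t : ETrans Q N T Γ) (p : Q) (X : N) (β : List Γ) (a : Option T) (q : Q)
    (Ψ : List (N × List Γ)) (β' : List Γ) : ETrans Q (Nb Q N T Γ) T (Gb Q N T Γ) :=
  ETrans.repl p (Sum.inl X) (β.map Sum.inl) a q [] (Sum.inl X)
    [Sum.inr (t, Ψ, β')] []

/-- Insert one pending inner stack below the top one. -/
def stepA (S : Γ) (t : ETrans Q N T Γ) (q : Q) (X : N) (β' : List Γ)
    (v : N × List Γ) (rest : List (N × List Γ)) : ETrans Q (Nb Q N T Γ) T (Gb Q N T Γ) :=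
  ETrans.repl q (Sum.inl X) [Sum.inr (t, v :: rest, β')] none q
    [(Sum.inl v.1, [Sum.inl S])] (Sum.inl X) [Sum.inr (t, rest, β')] []

def partA (S : Γ) (t : ETrans Q N T Γ) (q : Q) (X : N) (β' : List Γ) :
    List (N × List Γ) → List (ETrans Q (Nb Q N T Γ) T (Gb Q N T Γ))
  | [] => []
  | v :: rest => stepA S t q X β' v rest :: partA S t q X β' rest

/-- Push one pending symbol of `β'`. -/
def stepB (t : ETrans Q N T Γ) (q : Q) (X : N) (b : Γ) (rest : List Γ) :
    ETrans Q (Nb Q N T Γ) T (Gb Q N T Γ) :=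
  ETrans.repl q (Sum.inl X) [Sum.inr (t, [], b :: rest)] none q [] (Sum.inl X)
    [Sum.inl b, Sum.inr (t, [], rest)] []

def partB (t : ETrans Q N T Γ) (q : Q) (X : N) :
    List Γ → List (ETrans Q (Nb Q N T Γ) T (Gb Q N T Γ))
  | [] => []
  | b :: rest => stepB t q X b rest :: partB t q X rest

/-- Relabel to the final label and create the temporary inner stack above. -/
def stepC (S : Γ) (t : ETrans Q N T Γ) (q : Q) (X Y : N) (Ψ' : List (N × List Γ)) :
    ETrans Q (Nb Q N T Γ) T (Gb Q N T Γ) :=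
  ETrans.repl q (Sum.inl X) [Sum.inr (t, [], [])] none q [] (Sum.inl Y) []
    [(Sum.inr (t, Ψ'), [Sum.inl S])]

/-- Insert one pending inner stack below the temporary one. -/
def stepD (S : Γ) (t : ETrans Q N T Γ) (q : Q) (v : N × List Γ)
    (rest : List (N × List Γ)) : ETrans Q (Nb Q N T Γ) T (Gb Q N T Γ) :=
  ETrans.repl q (Sum.inr (t, v :: rest)) [Sum.inl S] none q
    [(Sum.inl v.1, [Sum.inl S])] (Sum.inr (t, rest)) [Sum.inl S] []

def partD (S : Γ) (t : ETrans Q N T Γ) (q : Q) :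
    List (N × List Γ) → List (ETrans Q (Nb Q N T Γ) T (Gb Q N T Γ))
  | [] => []
  | v :: rest => stepD S t q v rest :: partD S t q rest

/-- Pop the temporary inner stack. -/
def stepE (S : Γ) (t : ETrans Q N T Γ) (q : Q) : ETrans Q (Nb Q N T Γ) T (Gb Q N T Γ) :=
  ETrans.popT q (Sum.inr (t, [])) [Sum.inl S] none q

def chain (S : Γ) : ETrans Q N T Γ → List (ETrans Q (Nb Q N T Γ) T (Gb Q N T Γ))
  | ETrans.popT p X β a q => [ETrans.popT p (Sum.inl X) (β.map Sum.inl) a q]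
  | ETrans.repl p X β a q Ψ Y β' Ψ' =>
      stepS (ETrans.repl p X β a q Ψ Y β' Ψ') p X β a q Ψ β' ::
        (partA S (ETrans.repl p X β a q Ψ Y β' Ψ') q X β' Ψ ++
          partB (ETrans.repl p X β a q Ψ Y β' Ψ') q X β' ++
          [stepC S (ETrans.repl p X β a q Ψ Y β' Ψ') q X Y Ψ'] ++
          partD S (ETrans.repl p X β a q Ψ Y β' Ψ') q Ψ' ++
          [stepE S (ETrans.repl p X β a q Ψ Y β' Ψ') q])

/-- The binarized automaton. -/
def bin [Semiring A] (M : WEPDA Q N T Γ A) (S : Γ) (S₀ : N) :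
    WEPDA Q (Nb Q N T Γ) T (Gb Q N T Γ) A where
  trans := M.trans.flatMap (chain S)
  wt := fun _ => 1
  qInit := M.qInit
  stackInit := [(Sum.inl S₀, [Sum.inl S])]
  qFin := M.qFin
  stackFin := []

theorem mem_bin_trans [Semiring A] {M : WEPDA Q N T Γ A} {S : Γ} {S₀ : N}
    {t : ETrans Q N T Γ} (ht : t ∈ M.trans) {t' : ETrans Q (Nb Q N T Γ) T (Gb Q N T Γ)}
    (h : t' ∈ chain S t) : t' ∈ (bin M S S₀).trans :=
  List.mem_flatMap.mpr ⟨t, ht, h⟩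

theorem mem_partA {S : Γ} {t : ETrans Q N T Γ} {q : Q} {X : N} {β' : List Γ}
    {t' : ETrans Q (Nb Q N T Γ) T (Gb Q N T Γ)} :
    ∀ {l : List (N × List Γ)}, t' ∈ partA S t q X β' l →
      ∃ v rest, t' = stepA S t q X β' v rest
  | [], h => by simp [partA] at h
  | v :: rest, h => by
      rcases (List.mem_cons).mp h with h | h
      · exact ⟨v, rest, h⟩
      · exact mem_partA h

theorem mem_partB {t : ETrans Q N T Γ} {q : Q} {X : N}
    {t' : ETrans Q (Nb Q N T Γ) T (Gb Q N T Γ)} :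
    ∀ {l : List Γ}, t' ∈ partB t q X l → ∃ b rest, t' = stepB t q X b rest
  | [], h => by simp [partB] at h
  | b :: rest, h => by
      rcases (List.mem_cons).mp h with h | h
      · exact ⟨b, rest, h⟩
      · exact mem_partB h

theorem mem_partD {S : Γ} {t : ETrans Q N T Γ} {q : Q}
    {t' : ETrans Q (Nb Q N T Γ) T (Gb Q N T Γ)} :
    ∀ {l : List (N × List Γ)}, t' ∈ partD S t q l → ∃ v rest, t' = stepD S t q v rest
  | [], h => by simp [partD] at h
  | v :: rest, h => by
      rcases (List.mem_cons).mp h with h | h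
      · exact ⟨v, rest, h⟩
      · exact mem_partD h

/- ------------------------ forward simulation ------------------------ -/

section Forward

variable [Semiring A] {M : WEPDA Q N T Γ A} {S : Γ} {S₀ : N}

theorem phaseA (t : ETrans Q N T Γ) (q : Q) (X : N) (β' : List Γ) :
    ∀ (Ψr : List (N × List Γ)) (F : List (Nb Q N T Γ × List (Gb Q N T Γ)))
      (σ : List (Gb Q N T Γ)),
      (∀ x ∈ Ψr, (x : N × List Γ).2 = [S]) →
      (∀ t' ∈ partA S t q X β' Ψr, t' ∈ (bin M S S₀).trans) →
      ∀ {d : Q × List (Nb Q N T Γ × List (Gb Q N T Γ))} {w : List T},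
      Nonempty (Run (bin M S S₀)
        (q, F ++ emb Ψr ++ [(Sum.inl X, σ ++ [Sum.inr (t, [], β')])]) d w) →
      Nonempty (Run (bin M S S₀)
        (q, F ++ [(Sum.inl X, σ ++ [Sum.inr (t, Ψr, β')])]) d w) := by
  intro Ψr
  induction Ψr with
  | nil => intro F σ hc hsub d w h; simpa [emb] using h
  | cons v rest ih =>
      intro F σ hc hsub d w h
      have hv : (embP v : Nb Q N T Γ × List (Gb Q N T Γ)) = (Sum.inl v.1, [Sum.inl S]) := by
        simp [embP, hc v (by simp)]
      have h' : Nonempty (Run (bin M S S₀)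
          (q, (F ++ [((Sum.inl v.1 : Nb Q N T Γ), [(Sum.inl S : Gb Q N T Γ)])]) ++ emb rest ++
            [(Sum.inl X, σ ++ [Sum.inr (t, [], β')])]) d w) := by
        have : emb (v :: rest) = (Sum.inl v.1, ([Sum.inl S] : List (Gb Q N T Γ))) :: emb rest := by
          simp [emb, ← hv, embP]
        rw [this] at h
        simpa [List.append_assoc] using h
      have h2 := ih (F ++ [(Sum.inl v.1, [Sum.inl S])]) σ
        (fun x hx => hc x (by simp [hx]))
        (fun t' ht' => hsub t' (by simp [partA, ht'])) h'
      have hs : stepA S t q X β' v rest ∈ (bin M S S₀).trans := hsub _ (by simp [partA])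
      obtain ⟨r⟩ := h2
      have r' : Run (bin M S S₀)
          (q, F ++ [((Sum.inl v.1 : Nb Q N T Γ), [(Sum.inl S : Gb Q N T Γ)])] ++
            [(Sum.inl X, σ ++ [Sum.inr (t, rest, β')])] ++ []) d w := by
        simpa [List.append_assoc] using r
      refine ⟨?_⟩
      have r2 := Run.repl F σ q (Sum.inl X) [Sum.inr (t, v :: rest, β')] none q
        [(Sum.inl v.1, [Sum.inl S])] (Sum.inl X) [Sum.inr (t, rest, β')] [] hs r'
      simpa using r2

theorem phaseB (t : ETrans Q N T Γ) (q : Q) (X : N) :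
    ∀ (βr : List Γ) (F : List (Nb Q N T Γ × List (Gb Q N T Γ))) (σ : List (Gb Q N T Γ)),
      (∀ t' ∈ partB t q X βr, t' ∈ (bin M S S₀).trans) →
      ∀ {d : Q × List (Nb Q N T Γ × List (Gb Q N T Γ))} {w : List T},
      Nonempty (Run (bin M S S₀)
        (q, F ++ [(Sum.inl X, σ ++ βr.map Sum.inl ++ [Sum.inr (t, [], [])])]) d w) →
      Nonempty (Run (bin M S S₀)
        (q, F ++ [(Sum.inl X, σ ++ [Sum.inr (t, [], βr)])]) d w) := by
  intro βr
  induction βr with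
  | nil => intro F σ hsub d w h; simpa using h
  | cons b rest ih =>
      intro F σ hsub d w h
      have h' : Nonempty (Run (bin M S S₀)
          (q, F ++ [(Sum.inl X, (σ ++ [(Sum.inl b : Gb Q N T Γ)]) ++ rest.map Sum.inl ++
            [Sum.inr (t, [], [])])]) d w) := by
        simpa [List.append_assoc] using h
      have h2 := ih F (σ ++ [Sum.inl b])
        (fun t' ht' => hsub t' (by simp [partB, ht'])) h'
      have hs : stepB t q X b rest ∈ (bin M S S₀).trans := hsub _ (by simp [partB])
      obtain ⟨r⟩ := h2
      have r' : Run (bin M S S₀)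
          (q, F ++ [] ++ [(Sum.inl X, σ ++ [(Sum.inl b : Gb Q N T Γ),
            Sum.inr (t, [], rest)])] ++ []) d w := by
        simpa [List.append_assoc] using r
      refine ⟨?_⟩
      have r2 := Run.repl F σ q (Sum.inl X) [Sum.inr (t, [], b :: rest)] none q
        [] (Sum.inl X) [Sum.inl b, Sum.inr (t, [], rest)] [] hs r'
      simpa using r2

theorem phaseD (t : ETrans Q N T Γ) (q : Q) :
    ∀ (Ψr : List (N × List Γ)) (G : List (Nb Q N T Γ × List (Gb Q N T Γ))),
      (∀ x ∈ Ψr, (x : N × List Γ).2 = [S]) →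
      (∀ t' ∈ partD S t q Ψr, t' ∈ (bin M S S₀).trans) →
      ∀ {d : Q × List (Nb Q N T Γ × List (Gb Q N T Γ))} {w : List T},
      Nonempty (Run (bin M S S₀)
        (q, G ++ emb Ψr ++ [(Sum.inr (t, []), [Sum.inl S])]) d w) →
      Nonempty (Run (bin M S S₀)
        (q, G ++ [(Sum.inr (t, Ψr), [Sum.inl S])]) d w) := by
  intro Ψr
  induction Ψr with
  | nil => intro G hc hsub d w h; simpa [emb] using h
  | cons v rest ih =>
      intro G hc hsub d w h
      have hv : (embP v : Nb Q N T Γ × List (Gb Q N T Γ)) = (Sum.inl v.1, [Sum.inl S]) := by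
        simp [embP, hc v (by simp)]
      have h' : Nonempty (Run (bin M S S₀)
          (q, (G ++ [((Sum.inl v.1 : Nb Q N T Γ), [(Sum.inl S : Gb Q N T Γ)])]) ++ emb rest ++
            [(Sum.inr (t, []), [Sum.inl S])]) d w) := by
        have : emb (v :: rest) = (Sum.inl v.1, ([Sum.inl S] : List (Gb Q N T Γ))) :: emb rest := by
          simp [emb, ← hv, embP]
        rw [this] at h
        simpa [List.append_assoc] using h
      have h2 := ih (G ++ [(Sum.inl v.1, [Sum.inl S])])
        (fun x hx => hc x (by simp [hx]))
        (fun t' ht' => hsub t' (by simp [partD, ht'])) h'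
      have hs : stepD S t q v rest ∈ (bin M S S₀).trans := hsub _ (by simp [partD])
      obtain ⟨r⟩ := h2
      have r' : Run (bin M S S₀)
          (q, G ++ [((Sum.inl v.1 : Nb Q N T Γ), [(Sum.inl S : Gb Q N T Γ)])] ++
            [(Sum.inr (t, rest), [] ++ [(Sum.inl S : Gb Q N T Γ)])] ++ []) d w := by
        simpa [List.append_assoc] using r
      refine ⟨?_⟩
      have r2 := Run.repl G [] q (Sum.inr (t, v :: rest)) [Sum.inl S] none q
        [(Sum.inl v.1, [Sum.inl S])] (Sum.inr (t, rest)) [Sum.inl S] [] hs r'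
      simpa using r2

theorem fwd
    (htr : ∀ t ∈ M.trans,
      (∃ p X A' a q Ψ Y β Ψ',
        t = ETrans.repl p X [A'] a q Ψ Y β Ψ' ∧
        (∀ x ∈ Ψ, (x : N × List Γ).2 = [S]) ∧ (∀ x ∈ Ψ', (x : N × List Γ).2 = [S])) ∨
      (∃ p X A' a q, t = ETrans.popT p X [A'] a q)) :
    ∀ {c d : Q × List (N × List Γ)} {w : List T}, Run M c d w →
      Nonempty (Run (bin M S S₀) (c.1, emb c.2) (d.1, emb d.2) w) := by
  intro c d w r
  induction r with
  | refl c => exact ⟨Run.refl _⟩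
  | @repl Φ σ p X β a q Ψ Y β' Ψ' d w ht r ih =>
      set t := ETrans.repl p X β a q Ψ Y β' Ψ' with htdef
      have hcc : (∀ x ∈ Ψ, (x : N × List Γ).2 = [S]) ∧
          (∀ x ∈ Ψ', (x : N × List Γ).2 = [S]) := by
        rcases htr t ht with ⟨p₂, X₂, A₂, a₂, q₂, Ψ₂, Y₂, β₂, Ψ₂', heq, h1, h2⟩ |
          ⟨p₂, X₂, A₂, a₂, q₂, heq⟩
        · rw [htdef] at heq
          cases heq
          exact ⟨h1, h2⟩
        · rw [htdef] at heq; cases heq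
      obtain ⟨hcΨ, hcΨ'⟩ := hcc
      have hsubc : ∀ t' ∈ chain S t, t' ∈ (bin M S S₀).trans := fun t' h =>
        mem_bin_trans ht h
      -- step E
      have w4 : Nonempty (Run (bin M S S₀)
          (q, (emb Φ ++ emb Ψ ++ [((Sum.inl Y : Nb Q N T Γ), (σ ++ β').map Sum.inl)] ++ emb Ψ')
            ++ [(Sum.inr (t, []), [Sum.inl S])]) (d.1, emb d.2) w) := by
        obtain ⟨r0⟩ := ih
        have r0' : Run (bin M S S₀)
            (q, emb Φ ++ emb Ψ ++ [((Sum.inl Y : Nb Q N T Γ), (σ ++ β').map Sum.inl)] ++ emb Ψ')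
            (d.1, emb d.2) w := by
          simpa [emb_append, emb, embP] using r0
        have hse : ETrans.popT q (Sum.inr (t, [])) [Sum.inl S] none q ∈ (bin M S S₀).trans :=
          hsubc _ (by simp [chain, stepE, t])
        refine ⟨?_⟩
        have r2 := Run.popT (emb Φ ++ emb Ψ ++
          [((Sum.inl Y : Nb Q N T Γ), (σ ++ β').map Sum.inl)] ++ emb Ψ')
          q (Sum.inr (t, [])) [Sum.inl S] none q hse r0'
        simpa using r2
      -- phase D
      have w3 := phaseD (M := M) (S₀ := S₀) t q Ψ'
        (emb Φ ++ emb Ψ ++ [((Sum.inl Y : Nb Q N T Γ), (σ ++ β').map Sum.inl)]) hcΨ'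
        (fun t' h => hsubc t' (by simp [chain, t]; tauto)) (by
          simpa [List.append_assoc] using w4)
      -- step C
      have w2 : Nonempty (Run (bin M S S₀)
          (q, (emb Φ ++ emb Ψ) ++ [((Sum.inl X : Nb Q N T Γ),
            (σ.map Sum.inl ++ β'.map Sum.inl) ++ [Sum.inr (t, [], [])])]) (d.1, emb d.2) w) := by
        have hsc : stepC S t q X Y Ψ' ∈ (bin M S S₀).trans := hsubc _ (by simp [chain, t])
        obtain ⟨r0⟩ := w3
        have r0' : Run (bin M S S₀)
            (q, (emb Φ ++ emb Ψ) ++ [] ++ [((Sum.inl Y : Nb Q N T Γ),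
              (σ.map Sum.inl ++ β'.map Sum.inl) ++ [])] ++
              [(Sum.inr (t, Ψ'), [(Sum.inl S : Gb Q N T Γ)])]) (d.1, emb d.2) w := by
          simpa [List.append_assoc] using r0
        refine ⟨?_⟩
        have r2 := Run.repl (emb Φ ++ emb Ψ) (σ.map Sum.inl ++ β'.map Sum.inl) q
          (Sum.inl X) [Sum.inr (t, [], [])] none q [] (Sum.inl Y) []
          [(Sum.inr (t, Ψ'), [Sum.inl S])] hsc r0'
        simpa using r2
      -- phase B
      have w1 := phaseB (M := M) (S₀ := S₀) t q X β' (emb Φ ++ emb Ψ) (σ.map Sum.inl)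
        (fun t' h => hsubc t' (by simp [chain, t]; tauto)) (by
          simpa [List.append_assoc] using w2)
      -- phase A
      have w0 := phaseA (M := M) (S₀ := S₀) t q X β' Ψ (emb Φ) (σ.map Sum.inl) hcΨ
        (fun t' h => hsubc t' (by simp [chain, t]; tauto)) (by
          simpa [List.append_assoc] using w1)
      -- step S
      have hss : stepS t p X β a q Ψ β' ∈ (bin M S S₀).trans := hsubc _ (by simp [chain, t])
      obtain ⟨r0⟩ := w0
      have r0' : Run (bin M S S₀)
          (q, emb Φ ++ [] ++ [((Sum.inl X : Nb Q N T Γ),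
            σ.map Sum.inl ++ [Sum.inr (t, Ψ, β')])] ++ []) (d.1, emb d.2) w := by
        simpa using r0
      refine ⟨?_⟩
      have r2 := Run.repl (emb Φ) (σ.map Sum.inl) p (Sum.inl X) (β.map Sum.inl) a q
        [] (Sum.inl X) [Sum.inr (t, Ψ, β')] [] hss r0'
      simpa [emb_append, emb, embP] using r2
  | @popT Φ p X β a q d w ht r ih =>
      have hs : ETrans.popT p (Sum.inl X) (β.map Sum.inl) a q ∈ (bin M S S₀).trans :=
        mem_bin_trans ht (by simp [chain])
      obtain ⟨r0⟩ := ih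
      refine ⟨?_⟩
      have r2 := Run.popT (emb Φ) p (Sum.inl X) (β.map Sum.inl) a q hs r0
      simpa [emb_append, emb, embP] using r2

end Forward

/- ------------------------ backward simulation ------------------------ -/

/-- Decoding of configurations of the binarized automaton: a clean
configuration decodes to its preimage, and a mid-chain configuration
decodes to the target of the simulated transition. -/
inductive Dec (S : Γ) :
    Q × List (Nb Q N T Γ × List (Gb Q N T Γ)) → Q × List (N × List Γ) → Prop
  | clean (q : Q) (Φ : List (N × List Γ)) : Dec S (q, emb Φ) (q, Φ)
  | midAB (p : Q) (X : N) (β : List Γ) (a : Option T) (q : Q) (Ψ : List (N × List Γ))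
      (Y : N) (β' : List Γ) (Ψ' : List (N × List Γ)) (Φ : List (N × List Γ)) (σ : List Γ)
      (Ψd Ψr : List (N × List Γ)) (βd βr : List Γ)
      (hΨ : Ψ = Ψd ++ Ψr) (hβ : β' = βd ++ βr) :
      Dec S (q, emb Φ ++ emb Ψd ++
          [(Sum.inl X, σ.map Sum.inl ++ βd.map Sum.inl ++
            [Sum.inr (ETrans.repl p X β a q Ψ Y β' Ψ', Ψr, βr)])])
        (q, Φ ++ Ψ ++ [(Y, σ ++ β')] ++ Ψ')
  | midD (p : Q) (X : N) (β : List Γ) (a : Option T) (q : Q) (Ψ : List (N × List Γ))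
      (Y : N) (β' : List Γ) (Ψ' : List (N × List Γ)) (Φ : List (N × List Γ)) (σ : List Γ)
      (Ψd' Ψr' : List (N × List Γ)) (hΨ' : Ψ' = Ψd' ++ Ψr') :
      Dec S (q, emb Φ ++ emb Ψ ++ [(Sum.inl Y, (σ ++ β').map Sum.inl)] ++ emb Ψd' ++
          [(Sum.inr (ETrans.repl p X β a q Ψ Y β' Ψ', Ψr'), [Sum.inl S])])
        (q, Φ ++ Ψ ++ [(Y, σ ++ β')] ++ Ψ')

theorem dec_inv {S : Γ} {c : Q × List (Nb Q N T Γ × List (Gb Q N T Γ))}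
    {c' : Q × List (N × List Γ)} (h : Dec S c c') :
    (∃ q Φ, c = (q, emb Φ) ∧ c' = (q, Φ)) ∨
    (∃ p X β a q Ψ Y β' Ψ' Φ σ Ψd Ψr βd βr, Ψ = Ψd ++ Ψr ∧ β' = βd ++ βr ∧
      c = (q, emb Φ ++ emb Ψd ++
        [(Sum.inl X, σ.map Sum.inl ++ List.map Sum.inl βd ++
          [Sum.inr (ETrans.repl p X β a q Ψ Y β' Ψ', Ψr, βr)])]) ∧
      c' = (q, Φ ++ Ψ ++ [(Y, σ ++ β')] ++ Ψ')) ∨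
    (∃ p X β a q Ψ Y β' Ψ' Φ σ Ψd' Ψr', Ψ' = Ψd' ++ Ψr' ∧
      c = (q, emb Φ ++ emb Ψ ++ [(Sum.inl Y, (σ ++ β').map Sum.inl)] ++ emb Ψd' ++
        [(Sum.inr (ETrans.repl p X β a q Ψ Y β' Ψ', Ψr'), [Sum.inl S])]) ∧
      c' = (q, Φ ++ Ψ ++ [(Y, σ ++ β')] ++ Ψ')) := by
  cases h with
  | clean q Φ => exact Or.inl ⟨q, Φ, rfl, rfl⟩
  | midAB p X β a q Ψ Y β' Ψ' Φ σ Ψd Ψr βd βr hΨ hβ =>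
      exact Or.inr (Or.inl ⟨p, X, β, a, q, Ψ, Y, β', Ψ', Φ, σ, Ψd, Ψr, βd, βr, hΨ, hβ, rfl, rfl⟩)
  | midD p X β a q Ψ Y β' Ψ' Φ σ Ψd' Ψr' hΨ' =>
      exact Or.inr (Or.inr ⟨p, X, β, a, q, Ψ, Y, β', Ψ', Φ, σ, Ψd', Ψr', hΨ', rfl, rfl⟩)

section Backward

variable [Semiring A] {M : WEPDA Q N T Γ A} {S : Γ} {S₀ : N}

theorem back
    (htr : ∀ t ∈ M.trans,
      (∃ p X A' a q Ψ Y β Ψ',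
        t = ETrans.repl p X [A'] a q Ψ Y β Ψ' ∧
        (∀ x ∈ Ψ, (x : N × List Γ).2 = [S]) ∧ (∀ x ∈ Ψ', (x : N × List Γ).2 = [S])) ∨
      (∃ p X A' a q, t = ETrans.popT p X [A'] a q)) :
    ∀ {c e : Q × List (Nb Q N T Γ × List (Gb Q N T Γ))} {w : List T},
      Run (bin M S S₀) c e w →
      ∀ (chat : Q × List (N × List Γ)) (q₂ : Q) (Φ₂ : List (N × List Γ)),
        Dec S c chat → e = (q₂, emb Φ₂) → Nonempty (Run M chat (q₂, Φ₂) w) := by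
  intro c e w r
  induction r with
  | refl c =>
      intro chat q₂ Φ₂ hd he
      rcases dec_inv hd with ⟨qq, Φ, hc1, hc2⟩ |
        ⟨p, X, β, a, q, Ψ, Y, β', Ψ', Φ, σ, Ψd, Ψr, βd, βr, hΨ, hβ, hc1, hc2⟩ |
        ⟨p, X, β, a, q, Ψ, Y, β', Ψ', Φ, σ, Ψd', Ψr', hΨ', hc1, hc2⟩
      · rw [he] at hc1
        injection hc1 with h1 h2
        subst hc2
        subst h1
        have h3 := emb_inj h2
        subst h3
        exact ⟨Run.refl _⟩
      · rw [he] at hc1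
        injection hc1 with h1 h2
        exact (emb_no_inr_content h2 (by simp)).elim
      · rw [he] at hc1
        injection hc1 with h1 h2
        exact (emb_no_inr_label h2).elim
  | @repl Φ σ p X β a q Ψ Y β' Ψ' d w ht r ih =>
      intro chat q₂ Φ₂ hd he
      obtain ⟨t₀, ht₀, hmem⟩ := List.mem_flatMap.mp ht
      rcases htr t₀ ht₀ with ⟨p₀, X₀, A₀, a₀, q₀, Ψ₀, Y₀, β₀, Ψ₀', heq, hcΨ, hcΨ'⟩ |
        ⟨p₀, X₀, A₀, a₀, q₀, heq⟩
      · subst heq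
        simp only [chain, List.mem_cons, List.mem_append, List.mem_singleton,
          List.not_mem_nil, or_false] at hmem
        rcases hmem with hmem | (((hmem | hmem) | hmem) | hmem) | hmem
        · -- step S
          rw [stepS] at hmem
          injection hmem with e1 e2 e3 e4 e5 e6 e7 e8 e9
          subst e1; subst e2; subst e3; subst e4; subst e5; subst e6; subst e7
          subst e8; subst e9
          -- now the names p₀ a₀ q₀ have been replaced by p a q
          rcases dec_inv hd with ⟨qq, Phihat, hc1, hc2⟩ |
            ⟨ph, Xh, βh, ah, qh, Ψh, Yh, βh', Ψh', Φh, σh, Ψd, Ψr, βd, βr, hΨ, hβ, hc1, hc2⟩ |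
            ⟨ph, Xh, βh, ah, qh, Ψh, Yh, βh', Ψh', Φh, σh, Ψd', Ψr', hΨ', hc1, hc2⟩
          · -- clean configuration: this is a real step of M
            injection hc1 with h1 h2
            subst h1
            obtain ⟨Φ', y, hsplit, hembΦ', hy⟩ := emb_eq_snoc h2.symm
            rw [embP, Prod.mk.injEq] at hy
            obtain ⟨hy1, hy2⟩ := hy
            simp only [List.map_cons, List.map_nil] at hy2
            obtain ⟨z, g, hyz, hz1, hz2⟩ := map_eq_snoc hy2
            have hg : A₀ = g := by simpa using hz2.symm
            subst hg
            have hy1' : y.1 = X₀ := by simpa using hy1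
            have hdec : Dec S
                (q, Φ ++ [] ++ [((Sum.inl X₀ : Nb Q N T Γ),
                  σ ++ [Sum.inr (ETrans.repl p X₀ [A₀] a q Ψ₀ Y₀ β₀ Ψ₀', Ψ₀, β₀)])] ++ [])
                (q, Φ' ++ Ψ₀ ++ [(Y₀, z ++ β₀)] ++ Ψ₀') := by
              have := Dec.midAB (S := S) p X₀ [A₀] a q Ψ₀ Y₀ β₀ Ψ₀' Φ' z [] Ψ₀ [] β₀
                (by simp) (by simp)
              rw [hembΦ', hz1] at this
              simpa [emb_nil] using this
            obtain ⟨rr⟩ := ih _ q₂ Φ₂ hdec he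
            refine ⟨?_⟩
            have hchat : chat = (p, Φ' ++ [(X₀, z ++ [A₀])]) := by
              rw [hc2, hsplit]
              have : y = (X₀, z ++ [A₀]) := Prod.ext hy1' hyz
              rw [this]
            rw [hchat]
            exact Run.repl Φ' z p X₀ [A₀] a q Ψ₀ Y₀ β₀ Ψ₀' ht₀ rr
          · -- midAB: impossible, popped symbol is inl
            injection hc1 with h1 h2
            obtain ⟨h3, h4⟩ := snoc_inj h2
            rw [Prod.mk.injEq] at h4
            have h6 := h4.2
            simp only [List.map_cons, List.map_nil] at h6
            obtain ⟨_, h5⟩ := snoc_inj h6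
            simp at h5
          · -- midD: impossible, label is inl
            injection hc1 with h1 h2
            obtain ⟨h3, h4⟩ := snoc_inj h2
            rw [Prod.mk.injEq] at h4
            simp at h4
        · -- step A
          obtain ⟨v, rest, heq2⟩ := mem_partA hmem
          rw [stepA] at heq2
          injection heq2 with e1 e2 e3 e4 e5 e6 e7 e8 e9
          subst e1; subst e2; subst e3; subst e4; subst e5; subst e6; subst e7
          subst e8; subst e9
          -- now q₀ and p have been replaced by q, and a by none
          rcases dec_inv hd with ⟨qq, Phihat, hc1, hc2⟩ |
            ⟨ph, Xh, βh, ah, qh, Ψh, Yh, βh', Ψh', Φh, σh, Ψd, Ψr, βd, βr, hΨ, hβ, hc1, hc2⟩ |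
            ⟨ph, Xh, βh, ah, qh, Ψh, Yh, βh', Ψh', Φh, σh, Ψd', Ψr', hΨ', hc1, hc2⟩
          · injection hc1 with h1 h2
            exact (emb_no_inr_content h2.symm (by simp)).elim
          · injection hc1 with h1 h2
            obtain ⟨h3, h4⟩ := snoc_inj h2
            rw [Prod.mk.injEq] at h4
            obtain ⟨h5, h6⟩ := h4
            obtain ⟨h7, h8⟩ := snoc_inj h6
            rw [Sum.inr.injEq, Prod.mk.injEq, Prod.mk.injEq] at h8
            obtain ⟨heqt, h9, h10⟩ := h8
            injection heqt with f1 f2 f3 f4 f5 f6 f7 f8 f9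
            subst f1; subst f2; subst f3; subst f4; subst f5; subst f6; subst f7
            subst f8; subst f9
            have hβd : βd = [] := by
              rw [← h10] at hβ
              have hlen := congrArg List.length hβ
              simp only [List.length_append] at hlen
              have hl0 : βd.length = 0 := by omega
              exact List.length_eq_zero_iff.mp hl0
            subst hβd
            have hσ : σ = σh.map Sum.inl := by simpa using h7
            have hvΨ : v ∈ Ψ₀ := by rw [hΨ, ← h9]; simp
            have hdec : Dec S
                (q, Φ ++ [((Sum.inl v.1 : Nb Q N T Γ), [(Sum.inl S : Gb Q N T Γ)])] ++
                  [((Sum.inl X₀ : Nb Q N T Γ),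
                    σ ++ [Sum.inr (ETrans.repl p₀ X₀ [A₀] a₀ q Ψ₀ Y₀ β₀ Ψ₀', rest, β₀)])] ++ [])
                (q, Φh ++ Ψ₀ ++ [(Y₀, σh ++ β₀)] ++ Ψ₀') := by
              have := Dec.midAB (S := S) p₀ X₀ [A₀] a₀ q Ψ₀ Y₀ β₀ Ψ₀' Φh σh (Ψd ++ [v]) rest
                [] β₀ (by rw [hΨ, ← h9]; simp) (by simp)
              have hv : (embP v : Nb Q N T Γ × List (Gb Q N T Γ)) =
                  (Sum.inl v.1, [Sum.inl S]) := by simp [embP, hcΨ v hvΨ]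
              rw [emb_append] at this
              simp only [emb, List.map_cons, List.map_nil] at this
              rw [hv] at this
              rw [h3, hσ]
              simpa [List.append_assoc, emb] using this
            have hres := ih _ q₂ Φ₂ hdec he
            rw [hc2]
            simpa using hres
          · injection hc1 with h1 h2
            obtain ⟨h3, h4⟩ := snoc_inj h2
            rw [Prod.mk.injEq] at h4
            simp at h4
        · -- step B
          obtain ⟨b, rest, heq2⟩ := mem_partB hmem
          rw [stepB] at heq2
          injection heq2 with e1 e2 e3 e4 e5 e6 e7 e8 e9
          subst e1; subst e2; subst e3; subst e4; subst e5; subst e6; subst e7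
          subst e8; subst e9
          rcases dec_inv hd with ⟨qq, Phihat, hc1, hc2⟩ |
            ⟨ph, Xh, βh, ah, qh, Ψh, Yh, βh', Ψh', Φh, σh, Ψd, Ψr, βd, βr, hΨ, hβ, hc1, hc2⟩ |
            ⟨ph, Xh, βh, ah, qh, Ψh, Yh, βh', Ψh', Φh, σh, Ψd', Ψr', hΨ', hc1, hc2⟩
          · injection hc1 with h1 h2
            exact (emb_no_inr_content h2.symm (by simp)).elim
          · injection hc1 with h1 h2
            obtain ⟨h3, h4⟩ := snoc_inj h2
            rw [Prod.mk.injEq] at h4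
            obtain ⟨h5, h6⟩ := h4
            obtain ⟨h7, h8⟩ := snoc_inj h6
            rw [Sum.inr.injEq, Prod.mk.injEq, Prod.mk.injEq] at h8
            obtain ⟨heqt, h9, h10⟩ := h8
            injection heqt with f1 f2 f3 f4 f5 f6 f7 f8 f9
            subst f1; subst f2; subst f3; subst f4; subst f5; subst f6; subst f7
            subst f8; subst f9
            have hdec : Dec S
                (q, Φ ++ [] ++ [((Sum.inl X₀ : Nb Q N T Γ),
                  σ ++ [(Sum.inl b : Gb Q N T Γ),
                    Sum.inr (ETrans.repl p₀ X₀ [A₀] a₀ q Ψ₀ Y₀ β₀ Ψ₀', [], rest)])] ++ [])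
                (q, Φh ++ Ψ₀ ++ [(Y₀, σh ++ β₀)] ++ Ψ₀') := by
              have := Dec.midAB (S := S) p₀ X₀ [A₀] a₀ q Ψ₀ Y₀ β₀ Ψ₀' Φh σh Ψd []
                (βd ++ [b]) rest (by rw [hΨ, ← h9]) (by rw [hβ, ← h10]; simp)
              rw [h3, h7]
              simpa [List.append_assoc] using this
            have hres := ih _ q₂ Φ₂ hdec he
            rw [hc2]
            simpa using hres
          · injection hc1 with h1 h2
            obtain ⟨h3, h4⟩ := snoc_inj h2
            rw [Prod.mk.injEq] at h4
            simp at h4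
        · -- step C
          rw [stepC] at hmem
          injection hmem with e1 e2 e3 e4 e5 e6 e7 e8 e9
          subst e1; subst e2; subst e3; subst e4; subst e5; subst e6; subst e7
          subst e8; subst e9
          rcases dec_inv hd with ⟨qq, Phihat, hc1, hc2⟩ |
            ⟨ph, Xh, βh, ah, qh, Ψh, Yh, βh', Ψh', Φh, σh, Ψd, Ψr, βd, βr, hΨ, hβ, hc1, hc2⟩ |
            ⟨ph, Xh, βh, ah, qh, Ψh, Yh, βh', Ψh', Φh, σh, Ψd', Ψr', hΨ', hc1, hc2⟩
          · injection hc1 with h1 h2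
            exact (emb_no_inr_content h2.symm (by simp)).elim
          · injection hc1 with h1 h2
            obtain ⟨h3, h4⟩ := snoc_inj h2
            rw [Prod.mk.injEq] at h4
            obtain ⟨h5, h6⟩ := h4
            obtain ⟨h7, h8⟩ := snoc_inj h6
            rw [Sum.inr.injEq, Prod.mk.injEq, Prod.mk.injEq] at h8
            obtain ⟨heqt, h9, h10⟩ := h8
            injection heqt with f1 f2 f3 f4 f5 f6 f7 f8 f9
            subst f1; subst f2; subst f3; subst f4; subst f5; subst f6; subst f7
            subst f8; subst f9
            have hΨd : Ψ₀ = Ψd := by rw [hΨ, ← h9]; simp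
            have hβd : β₀ = βd := by rw [hβ, ← h10]; simp
            subst hΨd; subst hβd
            have hdec : Dec S
                (q, Φ ++ [] ++ [((Sum.inl Y₀ : Nb Q N T Γ), σ ++ [])] ++
                  [(Sum.inr (ETrans.repl p₀ X₀ [A₀] a₀ q Ψ₀ Y₀ β₀ Ψ₀', Ψ₀'),
                    [(Sum.inl S : Gb Q N T Γ)])])
                (q, Φh ++ Ψ₀ ++ [(Y₀, σh ++ β₀)] ++ Ψ₀') := by
              have := Dec.midD (S := S) p₀ X₀ [A₀] a₀ q Ψ₀ Y₀ β₀ Ψ₀' Φh σh [] Ψ₀'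
                (by simp)
              rw [h3, h7]
              simpa [List.append_assoc, emb_nil] using this
            have hres := ih _ q₂ Φ₂ hdec he
            rw [hc2]
            simpa using hres
          · injection hc1 with h1 h2
            obtain ⟨h3, h4⟩ := snoc_inj h2
            rw [Prod.mk.injEq] at h4
            simp at h4
        · -- step D
          obtain ⟨v, rest, heq2⟩ := mem_partD hmem
          rw [stepD] at heq2
          injection heq2 with e1 e2 e3 e4 e5 e6 e7 e8 e9
          subst e1; subst e2; subst e3; subst e4; subst e5; subst e6; subst e7
          subst e8; subst e9
          rcases dec_inv hd with ⟨qq, Phihat, hc1, hc2⟩ |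
            ⟨ph, Xh, βh, ah, qh, Ψh, Yh, βh', Ψh', Φh, σh, Ψd, Ψr, βd, βr, hΨ, hβ, hc1, hc2⟩ |
            ⟨ph, Xh, βh, ah, qh, Ψh, Yh, βh', Ψh', Φh, σh, Ψd', Ψr', hΨ', hc1, hc2⟩
          · injection hc1 with h1 h2
            exact (emb_no_inr_label h2.symm).elim
          · injection hc1 with h1 h2
            obtain ⟨h3, h4⟩ := snoc_inj h2
            rw [Prod.mk.injEq] at h4
            simp at h4
          · injection hc1 with h1 h2
            obtain ⟨h3, h4⟩ := snoc_inj h2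
            rw [Prod.mk.injEq] at h4
            obtain ⟨h5, h6⟩ := h4
            rw [Sum.inr.injEq, Prod.mk.injEq] at h5
            obtain ⟨heqt, h9⟩ := h5
            injection heqt with f1 f2 f3 f4 f5 f6 f7 f8 f9
            subst f1; subst f2; subst f3; subst f4; subst f5; subst f6; subst f7
            subst f8; subst f9
            have hσ : σ = [] := by simpa using h6
            have hvΨ : v ∈ Ψ₀' := by rw [hΨ', ← h9]; simp
            have hdec : Dec S
                (q, Φ ++ [((Sum.inl v.1 : Nb Q N T Γ), [(Sum.inl S : Gb Q N T Γ)])] ++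
                  [(Sum.inr (ETrans.repl p₀ X₀ [A₀] a₀ q Ψ₀ Y₀ β₀ Ψ₀', rest),
                    σ ++ [(Sum.inl S : Gb Q N T Γ)])] ++ [])
                (q, Φh ++ Ψ₀ ++ [(Y₀, σh ++ β₀)] ++ Ψ₀') := by
              have := Dec.midD (S := S) p₀ X₀ [A₀] a₀ q Ψ₀ Y₀ β₀ Ψ₀' Φh σh (Ψd' ++ [v]) rest
                (by rw [hΨ', ← h9]; simp)
              have hv : (embP v : Nb Q N T Γ × List (Gb Q N T Γ)) =
                  (Sum.inl v.1, [Sum.inl S]) := by simp [embP, hcΨ' v hvΨ]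
              rw [emb_append] at this
              simp only [emb, List.map_cons, List.map_nil] at this
              rw [hv] at this
              rw [h3, hσ]
              simpa [List.append_assoc, emb] using this
            have hres := ih _ q₂ Φ₂ hdec he
            rw [hc2]
            simpa using hres
        · -- step E is a popT transition: impossible here
          rw [stepE] at hmem
          cases hmem
      · -- t₀ is a popT transition: chain is a single popT, impossible here
        subst heq
        simp [chain] at hmem
  | @popT Φ p X β a q d w ht r ih =>
      intro chat q₂ Φ₂ hd he
      obtain ⟨t₀, ht₀, hmem⟩ := List.mem_flatMap.mp ht
      rcases htr t₀ ht₀ with ⟨p₀, X₀, A₀, a₀, q₀, Ψ₀, Y₀, β₀, Ψ₀', heq, hcΨ, hcΨ'⟩ |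
        ⟨p₀, X₀, A₀, a₀, q₀, heq⟩
      · subst heq
        simp only [chain, List.mem_cons, List.mem_append, List.mem_singleton,
          List.not_mem_nil, or_false] at hmem
        rcases hmem with hmem | (((hmem | hmem) | hmem) | hmem) | hmem
        · rw [stepS] at hmem; cases hmem
        · obtain ⟨v, rest, heq2⟩ := mem_partA hmem
          rw [stepA] at heq2; cases heq2
        · obtain ⟨b, rest, heq2⟩ := mem_partB hmem
          rw [stepB] at heq2; cases heq2
        · rw [stepC] at hmem; cases hmem
        · obtain ⟨v, rest, heq2⟩ := mem_partD hmem
          rw [stepD] at heq2; cases heq2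
        · -- step E
          rw [stepE] at hmem
          injection hmem with e1 e2 e3 e4 e5
          subst e1; subst e2; subst e3; subst e4; subst e5
          rcases dec_inv hd with ⟨qq, Phihat, hc1, hc2⟩ |
            ⟨ph, Xh, βh, ah, qh, Ψh, Yh, βh', Ψh', Φh, σh, Ψd, Ψr, βd, βr, hΨ, hβ, hc1, hc2⟩ |
            ⟨ph, Xh, βh, ah, qh, Ψh, Yh, βh', Ψh', Φh, σh, Ψd', Ψr', hΨ', hc1, hc2⟩
          · injection hc1 with h1 h2
            exact (emb_no_inr_label h2.symm).elim
          · injection hc1 with h1 h2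
            obtain ⟨h3, h4⟩ := snoc_inj h2
            rw [Prod.mk.injEq] at h4
            simp at h4
          · injection hc1 with h1 h2
            obtain ⟨h3, h4⟩ := snoc_inj h2
            rw [Prod.mk.injEq] at h4
            obtain ⟨h5, h6⟩ := h4
            rw [Sum.inr.injEq, Prod.mk.injEq] at h5
            obtain ⟨heqt, h9⟩ := h5
            injection heqt with f1 f2 f3 f4 f5 f6 f7 f8 f9
            subst f1; subst f2; subst f3; subst f4; subst f5; subst f6; subst f7
            subst f8; subst f9
            have hΨd : Ψ₀' = Ψd' := by rw [hΨ', ← h9]; simp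
            subst hΨd
            have hdec : Dec S (q, Φ)
                (q, Φh ++ Ψ₀ ++ [(Y₀, σh ++ β₀)] ++ Ψ₀') := by
              have := Dec.clean (T := T) (S := S) q (Φh ++ Ψ₀ ++ [(Y₀, σh ++ β₀)] ++ Ψ₀')
              rw [h3]
              simpa [emb_append, emb, embP, List.append_assoc] using this
            have hres := ih _ q₂ Φ₂ hdec he
            rw [hc2]
            simpa using hres
      · -- t₀ is a popT transition of M
        subst heq
        simp only [chain, List.mem_singleton] at hmem
        injection hmem with e1 e2 e3 e4 e5
        subst e1; subst e2; subst e3; subst e4; subst e5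
        -- now p₀ a₀ q₀ have been replaced by p a q
        rcases dec_inv hd with ⟨qq, Phihat, hc1, hc2⟩ |
          ⟨ph, Xh, βh, ah, qh, Ψh, Yh, βh', Ψh', Φh, σh, Ψd, Ψr, βd, βr, hΨ, hβ, hc1, hc2⟩ |
          ⟨ph, Xh, βh, ah, qh, Ψh, Yh, βh', Ψh', Φh, σh, Ψd', Ψr', hΨ', hc1, hc2⟩
        · injection hc1 with h1 h2
          subst h1
          obtain ⟨Φ', y, hsplit, hembΦ', hy⟩ := emb_eq_snoc h2.symm
          rw [embP, Prod.mk.injEq] at hy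
          obtain ⟨hy1, hy2⟩ := hy
          have hy2' : y.2 = [A₀] :=
            List.map_injective_iff.mpr Sum.inl_injective hy2
          have hy1' : y.1 = X₀ := by simpa using hy1
          have hdec : Dec S (q, Φ) (q, Φ') := by
            rw [← hembΦ']
            exact Dec.clean q Φ'
          obtain ⟨rr⟩ := ih _ q₂ Φ₂ hdec he
          refine ⟨?_⟩
          have hchat : chat = (p, Φ' ++ [(X₀, [A₀])]) := by
            rw [hc2, hsplit]
            have : y = (X₀, [A₀]) := Prod.ext hy1' hy2'
            rw [this]
          rw [hchat]
          exact Run.popT Φ' p X₀ [A₀] a q ht₀ rr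
        · injection hc1 with h1 h2
          obtain ⟨h3, h4⟩ := snoc_inj h2
          rw [Prod.mk.injEq] at h4
          have h6 := h4.2
          rw [show (List.map Sum.inl [A₀] : List (Gb Q N T Γ)) = [] ++ [Sum.inl A₀]
            from rfl] at h6
          have h7 := (snoc_inj h6).2
          simp at h7
        · injection hc1 with h1 h2
          obtain ⟨h3, h4⟩ := snoc_inj h2
          rw [Prod.mk.injEq] at h4
          simp at h4

end Backward

/- ------------------------ binarized form ------------------------ -/

theorem bin_binarized [Semiring A] {M : WEPDA Q N T Γ A} {S : Γ} {S₀ : N}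
    (htr : ∀ t ∈ M.trans,
      (∃ p X A' a q Ψ Y β Ψ',
        t = ETrans.repl p X [A'] a q Ψ Y β Ψ' ∧
        (∀ x ∈ Ψ, (x : N × List Γ).2 = [S]) ∧ (∀ x ∈ Ψ', (x : N × List Γ).2 = [S])) ∨
      (∃ p X A' a q, t = ETrans.popT p X [A'] a q)) :
    WEPDA.IsBinarizedTopDown (Sum.inl S : Gb Q N T Γ) (Sum.inl S₀ : Nb Q N T Γ)
      (bin M S S₀) := by
  refine ⟨rfl, rfl, ?_⟩
  intro t' ht'
  obtain ⟨t₀, ht₀, hmem⟩ := List.mem_flatMap.mp ht'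
  rcases htr t₀ ht₀ with ⟨p₀, X₀, A₀, a₀, q₀, Ψ₀, Y₀, β₀, Ψ₀', heq, hcΨ, hcΨ'⟩ |
    ⟨p₀, X₀, A₀, a₀, q₀, heq⟩
  · subst heq
    simp only [chain, List.mem_cons, List.mem_append, List.mem_singleton,
      List.not_mem_nil, or_false] at hmem
    rcases hmem with hmem | (((hmem | hmem) | hmem) | hmem) | hmem
    · subst hmem
      refine Or.inr (Or.inr (Or.inl ⟨p₀, Sum.inl X₀, Sum.inl A₀, a₀, q₀, Sum.inl X₀,
        [Sum.inr (ETrans.repl p₀ X₀ [A₀] a₀ q₀ Ψ₀ Y₀ β₀ Ψ₀', Ψ₀, β₀)], by simp, ?_⟩))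
      rw [stepS]
      rfl
    · obtain ⟨v, rest, rfl⟩ := mem_partA hmem
      exact Or.inl ⟨q₀, Sum.inl X₀,
        Sum.inr (ETrans.repl p₀ X₀ [A₀] a₀ q₀ Ψ₀ Y₀ β₀ Ψ₀', v :: rest, β₀), none, q₀,
        Sum.inl v.1, Sum.inl X₀,
        [Sum.inr (ETrans.repl p₀ X₀ [A₀] a₀ q₀ Ψ₀ Y₀ β₀ Ψ₀', rest, β₀)], by simp, rfl⟩
    · obtain ⟨b, rest, rfl⟩ := mem_partB hmem
      exact Or.inr (Or.inr (Or.inl ⟨q₀, Sum.inl X₀,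
        Sum.inr (ETrans.repl p₀ X₀ [A₀] a₀ q₀ Ψ₀ Y₀ β₀ Ψ₀', [], b :: rest), none, q₀,
        Sum.inl X₀,
        [Sum.inl b, Sum.inr (ETrans.repl p₀ X₀ [A₀] a₀ q₀ Ψ₀ Y₀ β₀ Ψ₀', [], rest)],
        by simp, rfl⟩))
    · subst hmem
      exact Or.inr (Or.inl ⟨q₀, Sum.inl X₀,
        Sum.inr (ETrans.repl p₀ X₀ [A₀] a₀ q₀ Ψ₀ Y₀ β₀ Ψ₀', [], []), none, q₀, Sum.inl Y₀,
        Sum.inr (ETrans.repl p₀ X₀ [A₀] a₀ q₀ Ψ₀ Y₀ β₀ Ψ₀', Ψ₀'), [], by simp, rfl⟩)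
    · obtain ⟨v, rest, rfl⟩ := mem_partD hmem
      exact Or.inl ⟨q₀, Sum.inr (ETrans.repl p₀ X₀ [A₀] a₀ q₀ Ψ₀ Y₀ β₀ Ψ₀', v :: rest),
        Sum.inl S, none, q₀, Sum.inl v.1,
        Sum.inr (ETrans.repl p₀ X₀ [A₀] a₀ q₀ Ψ₀ Y₀ β₀ Ψ₀', rest), [Sum.inl S],
        by simp, rfl⟩
    · subst hmem
      exact Or.inr (Or.inr (Or.inr ⟨q₀,
        Sum.inr (ETrans.repl p₀ X₀ [A₀] a₀ q₀ Ψ₀ Y₀ β₀ Ψ₀', []), Sum.inl S, none, q₀, rfl⟩))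
  · subst heq
    simp only [chain, List.mem_singleton] at hmem
    subst hmem
    exact Or.inr (Or.inr (Or.inr ⟨p₀, Sum.inl X₀, Sum.inl A₀, a₀, q₀, rfl⟩))

end Binarize

/-- Every top-down WEPDA is weakly equivalent to a binarized top-down
WEPDA. -/
theorem every_topDown_wepda_weakly_equivalent_to_binarized
    {Q N T Γ A : Type} [Semiring A] (M : WEPDA Q N T Γ A) (hM : M.IsTopDown) :
    ∃ (Q' N' Γ' : Type) (M' : WEPDA Q' N' T Γ' A) (S : Γ') (S₀ : N'),
      WEPDA.IsBinarizedTopDown S S₀ M' ∧ M'.language = M.language := by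
  obtain ⟨S, S₀, hinit, hfin, htr⟩ := hM
  refine ⟨Q, Binarize.Nb Q N T Γ, Binarize.Gb Q N T Γ, Binarize.bin M S S₀,
    Sum.inl S, Sum.inl S₀, Binarize.bin_binarized htr, ?_⟩
  ext w
  simp only [WEPDA.language, Set.mem_setOf_eq]
  constructor
  · rintro ⟨r⟩
    have hdec : Binarize.Dec S ((Binarize.bin M S S₀).qInit,
        (Binarize.bin M S S₀).stackInit) (M.qInit, [(S₀, [S])]) := by
      show Binarize.Dec S (M.qInit, [(Sum.inl S₀, [Sum.inl S])]) _
      have := Binarize.Dec.clean (T := T) (S := S) M.qInit [(S₀, [S])]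
      simpa [Binarize.emb, Binarize.embP] using this
    have hres := Binarize.back htr r _ M.qFin [] hdec rfl
    rw [hinit, hfin]
    exact hres
  · rintro ⟨r⟩
    have hres := Binarize.fwd (S := S) (S₀ := S₀) htr r
    rw [hinit, hfin] at hres
    simpa [Binarize.emb, Binarize.embP, Binarize.bin] using hres

end CtrlForm
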